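/- arXiv:1509.07980 — 2 statements merged into one kernel-verified Lean document; each statement's English description precedes it below -/
import Mathlib

section
/- Let k ≥ 1 and let A be a k-potent commutative integral residuated lattice. If there exists a ∈ A with a ≠ 1 such that b^k ≤ a for every b ∈ A with b ≠ 1, then A is well-connected, i.e., for all x, y ∈ A, x ∨ y = 1 implies x = 1 or y = 1. -/
/-- A commutative integral residuated lattice. -/
class CIRL (α : Type*) extends CommMonoid α, Lattice α, HImp α where
  residuation : ∀ x y z : α, x * y ≤ z ↔ y ≤ x ⇨ z
  le_one : ∀ x : α, x ≤ 1

section Aux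
variable {α : Type*} [CIRL α]

lemma cirl_le_one (x : α) : x ≤ 1 := CIRL.le_one x

lemma cirl_mul_le_mul_left (x : α) {y z : α} (h : y ≤ z) : x * y ≤ x * z := by
  rw [CIRL.residuation]
  exact le_trans h ((CIRL.residuation x z (x * z)).mp le_rfl)

lemma cirl_mul_le_right (x y : α) : x * y ≤ y := by
  calc x * y = y * x := mul_comm _ _
    _ ≤ y * 1 := cirl_mul_le_mul_left y (cirl_le_one x)
    _ = y := mul_one y

lemma cirl_mul_sup_le {x y z w : α} (h1 : x * y ≤ w) (h2 : x * z ≤ w) :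
    x * (y ⊔ z) ≤ w := by
  rw [CIRL.residuation]
  exact sup_le ((CIRL.residuation x y w).mp h1) ((CIRL.residuation x z w).mp h2)

lemma cirl_key (x y : α) : ∀ N m n : ℕ, m + n = N → (x ⊔ y) ^ (m + n) ≤ x ^ m ⊔ y ^ n := by
  intro N
  induction N using Nat.strong_induction_on with
  | _ N ih =>
    intro m n hmn
    match m, n with
    | 0, n =>
      exact le_trans (cirl_le_one _) (by rw [pow_zero]; exact le_sup_left)
    | m + 1, 0 =>
      exact le_trans (cirl_le_one _) (by rw [pow_zero]; exact le_sup_right)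
    | m + 1, n + 1 =>
      have e : (m + 1) + (n + 1) = (m + (n + 1)) + 1 := by ring
      rw [e, pow_succ]
      have ih1 : (x ⊔ y) ^ (m + (n + 1)) ≤ x ^ m ⊔ y ^ (n + 1) :=
        ih (m + (n + 1)) (by omega) m (n + 1) rfl
      have e2 : m + (n + 1) = (m + 1) + n := by ring
      have ih2 : (x ⊔ y) ^ (m + (n + 1)) ≤ x ^ (m + 1) ⊔ y ^ n := by
        rw [e2]; exact ih ((m + 1) + n) (by omega) (m + 1) n rfl
      refine cirl_mul_sup_le ?_ ?_
      · calc (x ⊔ y) ^ (m + (n + 1)) * x = x * (x ⊔ y) ^ (m + (n + 1)) := mul_comm _ _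
          _ ≤ x * (x ^ m ⊔ y ^ (n + 1)) := cirl_mul_le_mul_left _ ih1
          _ ≤ x ^ (m + 1) ⊔ y ^ (n + 1) := by
              refine cirl_mul_sup_le ?_ ?_
              · rw [mul_comm x (x ^ m), ← pow_succ]; exact le_sup_left
              · exact le_trans (cirl_mul_le_right _ _) le_sup_right
      · calc (x ⊔ y) ^ (m + (n + 1)) * y = y * (x ⊔ y) ^ (m + (n + 1)) := mul_comm _ _
          _ ≤ y * (x ^ (m + 1) ⊔ y ^ n) := cirl_mul_le_mul_left _ ih2
          _ ≤ x ^ (m + 1) ⊔ y ^ (n + 1) := by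
              refine cirl_mul_sup_le ?_ ?_
              · exact le_trans (cirl_mul_le_right _ _) le_sup_left
              · rw [mul_comm y (y ^ n), ← pow_succ]; exact le_sup_right

end Aux

theorem stmt3 {α : Type*} [CIRL α] (k : ℕ) (hk : 1 ≤ k)
    (hpot : ∀ x : α, x ^ (k + 1) = x ^ k)
    (a : α) (ha : a ≠ 1) (hcrit : ∀ b : α, b ≠ 1 → b ^ k ≤ a) :
    ∀ x y : α, x ⊔ y = 1 → x = 1 ∨ y = 1 := by
  intro x y hxy
  by_contra h
  push_neg at h
  obtain ⟨hx, hy⟩ := h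
  have h1 : (1 : α) ≤ x ^ k ⊔ y ^ k := by
    have := cirl_key x y (k + k) k k rfl
    rwa [hxy, one_pow] at this
  have h2 : x ^ k ⊔ y ^ k ≤ a := sup_le (hcrit x hx) (hcrit y hy)
  exact ha (le_antisymm (cirl_le_one a) (le_trans h1 h2))
end

section
/- Let k ≥ 1 and let B be a k-potent commutative integral residuated lattice whose order is not total (there exist incomparable elements). Then there exists a finite subset J ⊆ B with 1 ∈ J, closed under · and ∨, containing two incomparable elements, and with |J| ≤ 2^((k+1)^2). -/
section aux
variable {B : Type*} [CIRL B]

lemma cirl_mul_le_mul_left_s16 (a : B) {b c : B} (h : b ≤ c) : a * b ≤ a * c :=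
  (CIRL.residuation a b (a * c)).mpr
    (le_trans h ((CIRL.residuation a c (a * c)).mp le_rfl))

lemma cirl_mul_le_mul {a b c d : B} (h1 : a ≤ b) (h2 : c ≤ d) : a * c ≤ b * d := by
  calc a * c ≤ a * d := cirl_mul_le_mul_left_s16 a h2
    _ = d * a := mul_comm _ _
    _ ≤ d * b := cirl_mul_le_mul_left_s16 d h1
    _ = b * d := mul_comm _ _

lemma cirl_pow_trunc (k : ℕ) (hpot : ∀ x : B, x ^ (k + 1) = x ^ k)
    (x : B) {n : ℕ} (hn : k ≤ n) : x ^ n = x ^ k := by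
  induction n with
  | zero => rw [Nat.le_zero.mp hn]
  | succ m ih =>
    rcases Nat.lt_or_ge k (m + 1) with h | h
    · have hm : k ≤ m := by omega
      rw [pow_succ, ih hm, ← pow_succ, hpot]
    · have : k = m + 1 := le_antisymm hn h
      rw [this]

end aux

theorem stmt16 {B : Type*} [CIRL B] (k : ℕ) (hk : 1 ≤ k)
    (hpot : ∀ x : B, x ^ (k + 1) = x ^ k)
    (hnt : ∃ x y : B, ¬ x ≤ y ∧ ¬ y ≤ x) :
    ∃ J : Finset B, (1 : B) ∈ J ∧
      (∀ x ∈ J, ∀ y ∈ J, x * y ∈ J) ∧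
      (∀ x ∈ J, ∀ y ∈ J, x ⊔ y ∈ J) ∧
      (∃ a ∈ J, ∃ b ∈ J, ¬ a ≤ b ∧ ¬ b ≤ a) ∧
      J.card ≤ 2 ^ ((k + 1) ^ 2) := by
  classical
  obtain ⟨x, y, hxy, hyx⟩ := hnt
  set M : Finset B :=
    (Finset.range (k + 1) ×ˢ Finset.range (k + 1)).image (fun p => x ^ p.1 * y ^ p.2) with hM
  have memM : ∀ i j : ℕ, x ^ i * y ^ j ∈ M := by
    intro i j
    rcases Nat.lt_or_ge i (k + 1) with hi | hi
    · rcases Nat.lt_or_ge j (k + 1) with hj | hj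
      · exact Finset.mem_image.mpr ⟨(i, j), by simp [hi, hj], rfl⟩
      · have : y ^ j = y ^ k := cirl_pow_trunc k hpot y (by omega)
        rw [this]
        exact Finset.mem_image.mpr ⟨(i, k), by simp [hi], rfl⟩
    · have hx : x ^ i = x ^ k := cirl_pow_trunc k hpot x (by omega)
      rcases Nat.lt_or_ge j (k + 1) with hj | hj
      · rw [hx]
        exact Finset.mem_image.mpr ⟨(k, j), by simp [hj], rfl⟩
      · have hy : y ^ j = y ^ k := cirl_pow_trunc k hpot y (by omega)
        rw [hx, hy]
        exact Finset.mem_image.mpr ⟨(k, k), by simp, rfl⟩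
  have Mmul : ∀ a ∈ M, ∀ b ∈ M, a * b ∈ M := by
    intro a ha b hb
    obtain ⟨⟨i, j⟩, _, rfl⟩ := Finset.mem_image.mp ha
    obtain ⟨⟨i', j'⟩, _, rfl⟩ := Finset.mem_image.mp hb
    have : (x ^ i * y ^ j) * (x ^ i' * y ^ j') = x ^ (i + i') * y ^ (j + j') := by
      rw [pow_add, pow_add, mul_mul_mul_comm]
    rw [this]
    exact memM _ _
  -- f : join of a finite set, with f ∅ = 1
  set f : Finset B → B := fun S => if h : S.Nonempty then S.sup' h id else 1 with hf
  set J : Finset B := M.powerset.image f with hJ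
  have fmem : ∀ S ⊆ M, f S ∈ J := fun S hS =>
    Finset.mem_image.mpr ⟨S, Finset.mem_powerset.mpr hS, rfl⟩
  have fempty : f ∅ = 1 := by simp [hf]
  have fsingle : ∀ a : B, f {a} = a := by intro a; simp [hf]
  have h1 : (1 : B) ∈ J := by
    have := fmem ∅ (Finset.empty_subset M); rwa [fempty] at this
  have hxM : x ∈ M := by have := memM 1 0; simpa using this
  have hyM : y ∈ M := by have := memM 0 1; simpa using this
  have hxJ : x ∈ J := by have := fmem {x} (by simpa using hxM); rwa [fsingle] at this
  have hyJ : y ∈ J := by have := fmem {y} (by simpa using hyM); rwa [fsingle] at this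
  refine ⟨J, h1, ?_, ?_, ⟨x, hxJ, y, hyJ, hxy, hyx⟩, ?_⟩
  · -- closed under multiplication
    intro a ha b hb
    obtain ⟨S, hS, rfl⟩ := Finset.mem_image.mp ha
    obtain ⟨T, hT, rfl⟩ := Finset.mem_image.mp hb
    rw [Finset.mem_powerset] at hS hT
    rcases eq_or_ne S ∅ with rfl | hSne
    · rw [fempty, one_mul]; exact fmem T hT
    rcases eq_or_ne T ∅ with rfl | hTne
    · rw [fempty, mul_one]; exact fmem S hS
    have hSn : S.Nonempty := Finset.nonempty_iff_ne_empty.mpr hSne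
    have hTn : T.Nonempty := Finset.nonempty_iff_ne_empty.mpr hTne
    set U : Finset B := Finset.image₂ (· * ·) S T with hU
    have hUM : U ⊆ M := by
      intro u hu
      obtain ⟨s, hs, t, ht, rfl⟩ := Finset.mem_image₂.mp hu
      exact Mmul s (hS hs) t (hT ht)
    have hUn : U.Nonempty := hSn.image₂ hTn
    have hfS : f S = S.sup' hSn id := by simp [hf, hSn]
    have hfT : f T = T.sup' hTn id := by simp [hf, hTn]
    have hfU : f U = U.sup' hUn id := by simp [hf, hUn]
    have key : f S * f T = f U := by
      rw [hfS, hfT, hfU]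
      apply le_antisymm
      · rw [CIRL.residuation]
        apply Finset.sup'_le
        intro t ht
        rw [← CIRL.residuation, mul_comm, CIRL.residuation]
        apply Finset.sup'_le
        intro s hs
        rw [← CIRL.residuation]
        have : t * s ∈ U := Finset.mem_image₂.mpr ⟨s, hs, t, ht, mul_comm s t⟩
        exact Finset.le_sup' id this
      · apply Finset.sup'_le
        intro u hu
        obtain ⟨s, hs, t, ht, rfl⟩ := Finset.mem_image₂.mp hu
        exact cirl_mul_le_mul (Finset.le_sup' id hs) (Finset.le_sup' id ht)
    rw [key]
    exact fmem U hUM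
  · -- closed under sup
    intro a ha b hb
    obtain ⟨S, hS, rfl⟩ := Finset.mem_image.mp ha
    obtain ⟨T, hT, rfl⟩ := Finset.mem_image.mp hb
    rw [Finset.mem_powerset] at hS hT
    rcases eq_or_ne S ∅ with rfl | hSne
    · rw [fempty]
      have : (1 : B) ⊔ f T = 1 := sup_eq_left.mpr (CIRL.le_one _)
      rw [this]; exact h1
    rcases eq_or_ne T ∅ with rfl | hTne
    · rw [fempty]
      have : f S ⊔ (1 : B) = 1 := sup_eq_right.mpr (CIRL.le_one _)
      rw [this]; exact h1
    have hSn : S.Nonempty := Finset.nonempty_iff_ne_empty.mpr hSne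
    have hTn : T.Nonempty := Finset.nonempty_iff_ne_empty.mpr hTne
    have key : f S ⊔ f T = f (S ∪ T) := by
      simp only [hf, dif_pos hSn, dif_pos hTn, dif_pos (hSn.mono Finset.subset_union_left)]
      exact (Finset.sup'_union hSn hTn id).symm
    rw [key]
    exact fmem _ (Finset.union_subset hS hT)
  · -- cardinality
    calc J.card ≤ M.powerset.card := Finset.card_image_le
      _ = 2 ^ M.card := Finset.card_powerset M
      _ ≤ 2 ^ ((k + 1) ^ 2) := by
          apply Nat.pow_le_pow_right (by norm_num)
          calc M.card ≤ ((Finset.range (k+1)) ×ˢ (Finset.range (k+1))).card :=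
                Finset.card_image_le
            _ = (k + 1) ^ 2 := by simp [sq]
end
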